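/- Let n ≥ 1 and let κ₁ ≤ κ₂ ≤ ... ≤ κₙ be a non-descending finite sequence of measurable cardinals, and let U₁, ..., Uₙ be normal measures over κ₁, ..., κₙ respectively. Let B be any set, let Aᵢ ∈ Uᵢ for each i, and let F : ∏ᵢ₌₁ⁿ Aᵢ → B be any function on the set of increasing n-tuples from A₁, ..., Aₙ. Then there exist sets Hᵢ ⊆ Aᵢ with Hᵢ ∈ Uᵢ, and a set of indices I ⊆ {1, ..., n}, such that for all increasing tuples ᾱ, β̄ ∈ ∏ᵢ₌₁ⁿ Hᵢ one has F(ᾱ) = F(β̄) if and only if ᾱ ↾ I = β̄ ↾ I. (In other words, the induced function F_I on the set of restrictions to I of tuples in ∏ᵢ₌₁ⁿ Hᵢ, defined by F_I(ᾱ ↾ I) = F(ᾱ), is well defined and injective.) -/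

import Mathlib

open Set

/-- `U` is a normal measure over `κ`: a κ-complete nonprincipal ultrafilter on
the ordinals below `κ` which is closed under diagonal intersections. -/
structure IsNormalMeasure (κ : Ordinal) (U : Set (Set Ordinal)) : Prop where
  sets_subset : ∀ A ∈ U, A ⊆ Set.Iio κ
  univ_mem : Set.Iio κ ∈ U
  empty_not_mem : (∅ : Set Ordinal) ∉ U
  superset_mem : ∀ A ∈ U, ∀ B ⊆ Set.Iio κ, A ⊆ B → B ∈ U
  inter_mem : ∀ A ∈ U, ∀ B ∈ U, A ∩ B ∈ U
  nonprincipal : ∀ α : Ordinal, {α} ∉ U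
  ultra : ∀ A ⊆ Set.Iio κ, A ∈ U ∨ Set.Iio κ \ A ∈ U
  complete : ∀ θ < κ, ∀ s : Ordinal → Set Ordinal,
      (∀ i < θ, s i ∈ U) → {β | β < κ ∧ ∀ i < θ, β ∈ s i} ∈ U
  normal : ∀ s : Ordinal → Set Ordinal, (∀ α < κ, s α ∈ U) →
      {β | β < κ ∧ ∀ α < β, β ∈ s α} ∈ U

/-- The increasing product `∏ᵢ Aᵢ`: the set of strictly increasing `n`-tuples
`x` of ordinals with `x i ∈ A i` for every `i`. -/
def IncProd {n : ℕ} (A : Fin n → Set Ordinal) : Set (Fin n → Ordinal) :=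
  {x | StrictMono x ∧ ∀ i, x i ∈ A i}

namespace ImpCo

variable {κ : Ordinal} {U : Set (Set Ordinal)}

lemma nm_nonempty (h : IsNormalMeasure κ U) {S : Set Ordinal} (hS : S ∈ U) :
    S.Nonempty := by
  rcases S.eq_empty_or_nonempty with he | hne
  · exact absurd (he ▸ hS) h.empty_not_mem
  · exact hne

lemma nm_compl_singleton (h : IsNormalMeasure κ U) (α : Ordinal) :
    Set.Iio κ \ {α} ∈ U := by
  by_cases hα : α < κ
  · rcases h.ultra {α} (by simpa using hα) with h1 | h1
    · exact absurd h1 (h.nonprincipal α)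
    · exact h1
  · refine h.superset_mem _ h.univ_mem _ diff_subset ?_
    intro β hβ
    exact ⟨hβ, by rintro rfl; exact hα hβ⟩

lemma nm_co_bounded (h : IsNormalMeasure κ U) {θ : Ordinal} (hθ : θ < κ) :
    Set.Iio κ \ Set.Iio θ ∈ U := by
  have hT := h.complete θ hθ (fun i => Set.Iio κ \ {i})
    (fun i _ => nm_compl_singleton h i)
  refine h.superset_mem _ hT _ diff_subset ?_
  rintro β ⟨hβκ, hβ⟩
  refine ⟨hβκ, fun hβθ => ?_⟩
  exact (hβ β hβθ).2 rfl

lemma nm_limit (h : IsNormalMeasure κ U) (hcard : (κ.card).ord = κ)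
    (hmeas : Cardinal.aleph0 < κ.card) : Order.IsSuccLimit κ := by
  have := Cardinal.isSuccLimit_ord hmeas.le
  rwa [hcard] at this

lemma nm_unbounded (h : IsNormalMeasure κ U) (hlim : Order.IsSuccLimit κ)
    {S : Set Ordinal} (hS : S ∈ U) {θ : Ordinal} (hθ : θ < κ) :
    ∃ β ∈ S, θ < β := by
  have h1 : θ + 1 < κ := by
    have := hlim.succ_lt hθ
    simpa [Order.succ] using this
  have h2 : S ∩ (Set.Iio κ \ Set.Iio (θ + 1)) ∈ U :=
    h.inter_mem _ hS _ (nm_co_bounded h h1)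
  obtain ⟨β, hβS, -, hβ⟩ := nm_nonempty h h2
  refine ⟨β, hβS, ?_⟩
  have h3 : θ + 1 ≤ β := not_lt.mp hβ
  rw [Ordinal.add_one_eq_succ] at h3
  exact Order.succ_le_iff.mp h3


lemma nm_inter_fin (h : IsNormalMeasure κ U) :
    ∀ (m : ℕ) (f : Fin m → Set Ordinal), (∀ j, f j ∈ U) →
      (Set.Iio κ ∩ ⋂ j, f j) ∈ U := by
  intro m
  induction m with
  | zero =>
    intro f hf
    refine h.superset_mem _ h.univ_mem _ inter_subset_left ?_
    intro β hβ
    exact ⟨hβ, by simp⟩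
  | succ m ih =>
    intro f hf
    have h1 := ih (fun j => f j.succ) (fun j => hf j.succ)
    have h2 := h.inter_mem _ h1 _ (hf 0)
    refine h.superset_mem _ h2 _ inter_subset_left ?_
    rintro β ⟨⟨hβκ, hβ⟩, hβ0⟩
    refine ⟨hβκ, ?_⟩
    simp only [mem_iInter] at hβ ⊢
    intro j
    rcases Fin.eq_zero_or_eq_succ j with rfl | ⟨j', rfl⟩
    · exact hβ0
    · exact hβ j'

end ImpCo

namespace ImpCo

variable {n : ℕ} {κ : Fin n → Ordinal} {U : Fin n → Set (Set Ordinal)}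

lemma U_eq_kappa_eq (hU : ∀ i, IsNormalMeasure (κ i) (U i)) {i j : Fin n}
    (hij : U i = U j) : κ i = κ j := by
  have h1 : Set.Iio (κ i) ∈ U j := hij ▸ (hU i).univ_mem
  have h2 : Set.Iio (κ j) ∈ U i := hij ▸ (hU j).univ_mem
  have s1 : Set.Iio (κ i) ⊆ Set.Iio (κ j) := (hU j).sets_subset _ h1
  have s2 : Set.Iio (κ j) ⊆ Set.Iio (κ i) := (hU i).sets_subset _ h2
  by_contra hne
  rcases lt_or_gt_of_ne hne with hlt | hlt
  · exact absurd (s2 hlt) (by simp)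
  · exact absurd (s1 hlt) (by simp)

lemma sep_exists (hU : ∀ i, IsNormalMeasure (κ i) (U i)) (a b : Fin n)
    (hab : U a ≠ U b) :
    ∃ ST : Set Ordinal × Set Ordinal,
      ST.1 ∈ U a ∧ ST.2 ∈ U b ∧ ST.1 ∩ ST.2 = ∅ ∧
      (κ b < κ a → ST.1 ∩ Set.Iio (κ b) = ∅) ∧
      (κ a < κ b → ST.2 ∩ Set.Iio (κ a) = ∅) := by
  rcases lt_trichotomy (κ a) (κ b) with hlt | heq | hlt
  · refine ⟨⟨Set.Iio (κ a), Set.Iio (κ b) \ Set.Iio (κ a)⟩, (hU a).univ_mem,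
      nm_co_bounded (hU b) hlt, ?_, ?_, ?_⟩
    · ext β; simp only [mem_inter_iff, mem_diff, mem_empty_iff_false, iff_false]
      tauto
    · intro hc; exact absurd (hc.trans hlt) (lt_irrefl _)
    · intro _; ext β
      simp only [mem_inter_iff, mem_diff, mem_Iio, mem_empty_iff_false, iff_false]
      tauto
  · have : ∃ S, (S ∈ U a ∧ S ∉ U b) ∨ (S ∈ U b ∧ S ∉ U a) := by
      by_contra hc
      push_neg at hc
      exact hab (Set.ext fun S => ⟨fun hS => (hc S).1 hS, fun hS => (hc S).2 hS⟩)
    obtain ⟨S, hS | hS⟩ := this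
    · have hsub : S ⊆ Set.Iio (κ b) := heq ▸ (hU a).sets_subset _ hS.1
      have hcb : Set.Iio (κ b) \ S ∈ U b := by
        rcases (hU b).ultra S hsub with h1 | h1
        · exact absurd h1 hS.2
        · exact h1
      refine ⟨⟨S, Set.Iio (κ b) \ S⟩, hS.1, hcb, ?_, ?_, ?_⟩
      · ext β; simp only [mem_inter_iff, mem_diff, mem_empty_iff_false, iff_false]; tauto
      · intro hc; exact absurd (heq ▸ hc) (lt_irrefl _)
      · intro hc; exact absurd (heq ▸ hc) (lt_irrefl _)
    · have hsub : S ⊆ Set.Iio (κ a) := heq ▸ (hU b).sets_subset _ hS.1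
      have hca : Set.Iio (κ a) \ S ∈ U a := by
        rcases (hU a).ultra S hsub with h1 | h1
        · exact absurd h1 hS.2
        · exact h1
      refine ⟨⟨Set.Iio (κ a) \ S, S⟩, hca, hS.1, ?_, ?_, ?_⟩
      · ext β; simp only [mem_inter_iff, mem_diff, mem_empty_iff_false, iff_false]; tauto
      · intro hc; exact absurd (heq ▸ hc) (lt_irrefl _)
      · intro hc; exact absurd (heq ▸ hc) (lt_irrefl _)
  · refine ⟨⟨Set.Iio (κ a) \ Set.Iio (κ b), Set.Iio (κ b)⟩,
      nm_co_bounded (hU a) hlt, (hU b).univ_mem, ?_, ?_, ?_⟩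
    · ext β; simp only [mem_inter_iff, mem_diff, mem_Iio, mem_empty_iff_false, iff_false]
      tauto
    · intro _; ext β
      simp only [mem_inter_iff, mem_diff, mem_Iio, mem_empty_iff_false, iff_false]
      tauto
    · intro hc; exact absurd (hc.trans hlt) (lt_irrefl _)

open Classical in
noncomputable def sepSet (hU : ∀ i, IsNormalMeasure (κ i) (U i)) (i j : Fin n) :
    Set Ordinal :=
  if hij : U i = U j then Set.Iio (κ i)
  else if i < j then (Classical.choose (sep_exists hU i j hij)).1
  else (Classical.choose (sep_exists hU j i (fun h => hij h.symm))).2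

lemma sepSet_mem (hU : ∀ i, IsNormalMeasure (κ i) (U i)) (i j : Fin n) :
    sepSet hU i j ∈ U i := by
  rw [sepSet]
  split
  · exact (hU i).univ_mem
  · rename_i hij
    split
    · exact (Classical.choose_spec (sep_exists hU i j hij)).1
    · exact (Classical.choose_spec (sep_exists hU j i (fun h => hij h.symm))).2.1

lemma sepSet_disjoint (hU : ∀ i, IsNormalMeasure (κ i) (U i)) {i j : Fin n}
    (hij : U i ≠ U j) : sepSet hU i j ∩ sepSet hU j i = ∅ := by
  have hji : U j ≠ U i := fun h => hij h.symm
  have hne : i ≠ j := fun h => hij (h ▸ rfl)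
  rw [sepSet, sepSet, dif_neg hij, dif_neg hji]
  rcases lt_or_gt_of_ne hne with hlt | hlt
  · rw [if_pos hlt, if_neg (not_lt.mpr hlt.le)]
    exact (Classical.choose_spec (sep_exists hU i j hij)).2.2.1
  · rw [if_neg (not_lt.mpr hlt.le), if_pos hlt]
    rw [Set.inter_comm]
    exact (Classical.choose_spec (sep_exists hU j i hji)).2.2.1

lemma sepSet_avoid (hU : ∀ i, IsNormalMeasure (κ i) (U i)) {i j : Fin n}
    (hκ : κ j < κ i) : sepSet hU i j ∩ Set.Iio (κ j) = ∅ := by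
  have hij : U i ≠ U j := fun h => absurd (U_eq_kappa_eq hU h) (ne_of_gt hκ)
  have hji : U j ≠ U i := fun h => hij h.symm
  have hne : i ≠ j := fun h => hij (h ▸ rfl)
  rw [sepSet, dif_neg hij]
  rcases lt_or_gt_of_ne hne with hlt | hlt
  · rw [if_pos hlt]
    exact (Classical.choose_spec (sep_exists hU i j hij)).2.2.2.1 hκ
  · rw [if_neg (not_lt.mpr hlt.le)]
    exact (Classical.choose_spec (sep_exists hU j i hji)).2.2.2.2 hκ

end ImpCo

namespace ImpCo

lemma rowbottom : ∀ (m : ℕ) (lam : Fin m → Ordinal) (V : Fin m → Set (Set Ordinal)),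
    (∀ j, IsNormalMeasure (lam j) (V j)) →
    ∀ (C : Fin m → Set Ordinal), (∀ j, C j ∈ V j) →
    ∀ (c : (Fin m → Ordinal) → Bool),
    ∃ D : Fin m → Set Ordinal,
      (∀ j, D j ⊆ C j ∧ D j ∈ V j) ∧
      ∃ b, ∀ z : Fin m → Ordinal, StrictMono z → (∀ j, z j ∈ D j) → c z = b := by
  intro m
  induction m with
  | zero =>
    intro lam V hV C hC c
    refine ⟨C, fun j => ⟨subset_rfl, hC j⟩, c (fun j => j.elim0), ?_⟩
    intro z _ _
    congr 1
    funext j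
    exact j.elim0
  | succ m ih =>
    intro lam V hV C hC c
    have hIH := fun α : Ordinal =>
      ih (fun j => lam j.succ) (fun j => V j.succ) (fun j => hV j.succ)
        (fun j => C j.succ) (fun j => hC j.succ) (fun w => c (Fin.cons α w))
    choose D hD b hb using hIH
    -- diagonal intersection for each successor coordinate
    have hN : ∀ j : Fin m, {β | β < lam j.succ ∧ ∀ α < β, β ∈ D α j} ∈ V j.succ := by
      intro j
      exact (hV j.succ).normal (fun α => D α j) (fun α _ => (hD α j).2)
    -- split the first coordinate according to b
    set T : Set Ordinal := {α | α ∈ C 0 ∧ b α = true} with hT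
    have hTsub : T ⊆ Set.Iio (lam 0) := fun α hα => (hV 0).sets_subset _ (hC 0) hα.1
    have hsplit : ∃ D0, D0 ⊆ C 0 ∧ D0 ∈ V 0 ∧ ∃ b0, ∀ α ∈ D0, b α = b0 := by
      rcases (hV 0).ultra T hTsub with h1 | h1
      · exact ⟨T, fun α hα => hα.1, h1, true, fun α hα => hα.2⟩
      · refine ⟨(Set.Iio (lam 0) \ T) ∩ C 0, inter_subset_right,
          (hV 0).inter_mem _ h1 _ (hC 0), false, ?_⟩
        rintro α ⟨⟨-, hαT⟩, hαC⟩
        by_contra hc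
        exact hαT ⟨hαC, by simpa using hc⟩
    obtain ⟨D0, hD0sub, hD0mem, b0, hb0⟩ := hsplit
    refine ⟨Fin.cons D0 (fun j => {β | β < lam j.succ ∧ ∀ α < β, β ∈ D α j} ∩ C j.succ),
      ?_, b0, ?_⟩
    · intro j
      rcases Fin.eq_zero_or_eq_succ j with rfl | ⟨j', rfl⟩
      · simpa using ⟨hD0sub, hD0mem⟩
      · simp only [Fin.cons_succ]
        exact ⟨inter_subset_right, (hV j'.succ).inter_mem _ (hN j') _ (hC j'.succ)⟩
    · intro z hz hzD
      have hz0 : z 0 ∈ D0 := by simpa using hzD 0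
      have hw : ∀ j : Fin m, z j.succ ∈ D (z 0) j := by
        intro j
        have h1 := hzD j.succ
        simp only [Fin.cons_succ] at h1
        exact h1.1.2 (z 0) (hz (Fin.succ_pos j))
      have hcz : c z = b (z 0) := by
        have h2 := hb (z 0) (fun j => z j.succ)
          (fun a b hab => hz (by simpa using hab)) hw
        have h3 : Fin.cons (z 0) (fun j => z j.succ) = z := by
          funext j
          rcases Fin.eq_zero_or_eq_succ j with rfl | ⟨j', rfl⟩
          · simp
          · simp
        rwa [h3] at h2
      rw [hcz, hb0 _ hz0]

end ImpCo

namespace ImpCo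

variable {n : ℕ} {κ : Fin n → Ordinal} {U : Fin n → Set (Set Ordinal)}

/-- Build an increasing tuple through prescribed measure-one sets. -/
lemma build (hU : ∀ i, IsNormalMeasure (κ i) (U i)) (hlim : ∀ i, Order.IsSuccLimit (κ i))
    (H : Fin n → Set Ordinal) (hH : ∀ i, H i ∈ U i) :
    ∀ (m : ℕ) (G : Fin m → Fin n),
      (∀ k l : Fin m, k ≤ l → κ (G k) ≤ κ (G l)) →
      ∀ θ : Ordinal, (∀ k, θ < κ (G k)) →
      ∃ t : Fin m → Ordinal, StrictMono t ∧ (∀ k, t k ∈ H (G k)) ∧ ∀ k, θ < t k := by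
  intro m
  induction m with
  | zero =>
    intro G hG θ hθ
    exact ⟨fun k => k.elim0, fun a => a.elim0, fun a => a.elim0, fun a => a.elim0⟩
  | succ m ih =>
    intro G hG θ hθ
    obtain ⟨t, ht, htH, htθ⟩ := ih (fun k => G k.castSucc)
      (fun k l hkl => hG _ _ (by simpa using hkl)) θ (fun k => hθ k.castSucc)
    have hκpos : (0:Ordinal) < κ (G (Fin.last m)) :=
      lt_of_le_of_lt (zero_le (a := θ)) (hθ _)
    have hbound : max θ (Finset.univ.sup t) < κ (G (Fin.last m)) := by
      rcases (Finset.univ : Finset (Fin m)).eq_empty_or_nonempty with he | hne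
      · rw [he]
        simpa using hθ (Fin.last m)
      · rw [max_lt_iff]
        refine ⟨hθ _, ?_⟩
        rw [Finset.sup_lt_iff hκpos]
        intro k _
        have h1 : t k < κ (G k.castSucc) :=
          (hU _).sets_subset _ (hH _) (htH k)
        exact lt_of_lt_of_le h1 (hG _ _ (Fin.le_last _))
    obtain ⟨β, hβH, hβgt⟩ := nm_unbounded (hU _) (hlim _) (hH (G (Fin.last m))) hbound
    refine ⟨Fin.snoc t β, ?_, ?_, ?_⟩
    · intro c d hcd
      rcases Fin.eq_castSucc_or_eq_last d with ⟨d', rfl⟩ | rfl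
      · have hc : c < Fin.last m := lt_of_lt_of_le hcd (Fin.castSucc_lt_last d').le
        obtain ⟨c', rfl⟩ := (Fin.eq_castSucc_or_eq_last c).resolve_right
          (by rintro rfl; exact absurd hc (lt_irrefl _))
        rw [Fin.snoc_castSucc, Fin.snoc_castSucc]
        exact ht (by simpa using hcd)
      · obtain ⟨c', rfl⟩ := (Fin.eq_castSucc_or_eq_last c).resolve_right
          (by rintro rfl; exact absurd hcd (lt_irrefl _))
        rw [Fin.snoc_castSucc, Fin.snoc_last]
        calc t c' ≤ Finset.univ.sup t := Finset.le_sup (Finset.mem_univ c')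
          _ ≤ max θ (Finset.univ.sup t) := le_max_right _ _
          _ < β := hβgt
    · intro k
      rcases Fin.eq_castSucc_or_eq_last k with ⟨k', rfl⟩ | rfl
      · rw [Fin.snoc_castSucc]; exact htH k'
      · rw [Fin.snoc_last]; exact hβH
    · intro k
      rcases Fin.eq_castSucc_or_eq_last k with ⟨k', rfl⟩ | rfl
      · rw [Fin.snoc_castSucc]; exact htθ k'
      · rw [Fin.snoc_last]
        exact lt_of_le_of_lt (le_max_left _ _) hβgt

/-- Simultaneous homogenization for a list of pattern triples. -/
lemma homog_listAux {B : Type*} (hU : ∀ i, IsNormalMeasure (κ i) (U i))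
    (F : (Fin n → Ordinal) → B) (M : ℕ) :
    ∀ (L : List ((Fin n → Fin M) × (Fin n → Fin M) × (Fin M → Fin n)))
      (H0 : Fin n → Set Ordinal), (∀ i, H0 i ∈ U i) →
    ∃ H : Fin n → Set Ordinal, (∀ i, H i ⊆ H0 i ∧ H i ∈ U i) ∧
      ∀ lam ∈ L, ∃ bb : Bool,
        ∀ z : Fin M → Ordinal, StrictMono z → (∀ j, z j ∈ H (lam.2.2 j)) →
          ((F (z ∘ lam.1) = F (z ∘ lam.2.1)) ↔ bb = true) := by
  intro L
  induction L with
  | nil =>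
    intro H0 hH0
    exact ⟨H0, fun i => ⟨subset_rfl, hH0 i⟩, fun lam h => absurd h List.not_mem_nil⟩
  | cons lam L ihL =>
    intro H0 hH0
    classical
    obtain ⟨p, q, g⟩ := lam
    obtain ⟨D, hD, bb, hbb⟩ := rowbottom M (fun j => κ (g j)) (fun j => U (g j))
      (fun j => hU (g j)) (fun j => H0 (g j)) (fun j => hH0 (g j))
      (fun z => decide (F (z ∘ p) = F (z ∘ q)))
    have hEmem : ∀ (i : Fin n) (j : Fin M),
        (if _ : g j = i then D j else Set.Iio (κ i)) ∈ U i := by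
      intro i j
      by_cases h : g j = i
      · rw [dif_pos h]; exact h ▸ (hD j).2
      · rw [dif_neg h]; exact (hU i).univ_mem
    set H1 : Fin n → Set Ordinal :=
      fun i => H0 i ∩ ⋂ j, (if _ : g j = i then D j else Set.Iio (κ i)) with hH1def
    have hH1mem : ∀ i, H1 i ∈ U i := by
      intro i
      have h1 := nm_inter_fin (hU i) M _ (hEmem i)
      have h2 := (hU i).inter_mem _ (hH0 i) _ h1
      refine (hU i).superset_mem _ h2 _ ?_ ?_
      · exact fun x hx => (hU i).sets_subset _ (hH0 i) hx.1
      · rintro x ⟨hx0, -, hx2⟩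
        exact ⟨hx0, hx2⟩
    have hH1sub : ∀ i, H1 i ⊆ H0 i := fun i => inter_subset_left
    obtain ⟨H, hHsub, hHL⟩ := ihL H1 hH1mem
    refine ⟨H, fun i => ⟨(hHsub i).1.trans (hH1sub i), (hHsub i).2⟩, ?_⟩
    intro lam' hlam'
    rcases List.mem_cons.mp hlam' with rfl | hmem
    · refine ⟨bb, ?_⟩
      intro z hz hzH
      have hzD : ∀ j, z j ∈ D j := by
        intro j
        have h1 : z j ∈ H1 (g j) := (hHsub (g j)).1 (hzH j)
        have h2 := h1.2
        rw [mem_iInter] at h2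
        have h3 := h2 j
        rwa [dif_pos rfl] at h3
      have h4 := hbb z hz hzD
      constructor
      · intro h5; rw [← h4]; exact decide_eq_true h5
      · intro h5; exact of_decide_eq_true (h4.trans h5)
    · exact hHL lam' hmem

/-- Uniformize within groups of equal measures. -/
lemma uniformize (hU : ∀ i, IsNormalMeasure (κ i) (U i))
    (H : Fin n → Set Ordinal) (hH : ∀ i, H i ∈ U i) :
    ∃ H2 : Fin n → Set Ordinal, (∀ i, H2 i ⊆ H i ∧ H2 i ∈ U i) ∧
      ∀ i i', U i = U i' → H2 i = H2 i' := by
  classical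
  refine ⟨fun i => Set.Iio (κ i) ∩ ⋂ i', (if _ : U i' = U i then H i' else Set.Iio (κ i)),
    ?_, ?_⟩
  · intro i
    constructor
    · intro x hx
      have h1 := hx.2
      rw [mem_iInter] at h1
      have h2 := h1 i
      rwa [dif_pos rfl] at h2
    · refine nm_inter_fin (hU i) n _ ?_
      intro i'
      by_cases h : U i' = U i
      · rw [dif_pos h]; exact h ▸ hH i'
      · rw [dif_neg h]; exact (hU i).univ_mem
  · intro a b hab
    have hκ : κ a = κ b := U_eq_kappa_eq hU hab
    ext x
    simp only [mem_inter_iff, mem_iInter]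
    constructor
    · rintro ⟨h1, h2⟩
      refine ⟨hκ ▸ h1, fun i' => ?_⟩
      by_cases h : U i' = U b
      · rw [dif_pos h]
        have := h2 i'
        rwa [dif_pos (h.trans hab.symm)] at this
      · rw [dif_neg h]
        exact hκ ▸ h1
    · rintro ⟨h1, h2⟩
      refine ⟨hκ ▸ h1, fun i' => ?_⟩
      by_cases h : U i' = U a
      · rw [dif_pos h]
        have := h2 i'
        rwa [dif_pos (h.trans hab)] at this
      · rw [dif_neg h]
        exact hκ ▸ h1

end ImpCo

set_option maxHeartbeats 2000000 in
/-- Lemma (important coordinates): for measurable cardinals `κ₁ ≤ ... ≤ κₙ`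
with normal measures `U₁, ..., Uₙ`, sets `Aᵢ ∈ Uᵢ`, and any function
`F : ∏ᵢ Aᵢ → B` into any set `B`, there are `Hᵢ ⊆ Aᵢ` with `Hᵢ ∈ Uᵢ` and a set
of indices `I ⊆ {1, ..., n}` such that for all increasing tuples
`x, y ∈ ∏ᵢ Hᵢ`, `F x = F y` iff `x` and `y` agree on `I`; equivalently, the
induced function `F_I` on the set of restrictions to `I` is well defined and
injective. -/
theorem important_coordinates {n : ℕ} (hn : 0 < n)
    (κ : Fin n → Ordinal) (hmono : Monotone κ)
    (hcardinal : ∀ i, ((κ i).card).ord = κ i)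
    (hmeasurable : ∀ i, Cardinal.aleph0 < (κ i).card)
    (U : Fin n → Set (Set Ordinal)) (hU : ∀ i, IsNormalMeasure (κ i) (U i))
    {B : Type*} (A : Fin n → Set Ordinal) (hA : ∀ i, A i ∈ U i)
    (F : (Fin n → Ordinal) → B) :
    ∃ (H : Fin n → Set Ordinal) (I : Set (Fin n)),
      (∀ i, H i ⊆ A i ∧ H i ∈ U i) ∧
      ∀ x ∈ IncProd H, ∀ y ∈ IncProd H, (F x = F y ↔ ∀ i ∈ I, x i = y i) := by
  classical
  have hlim : ∀ i, Order.IsSuccLimit (κ i) := fun i =>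
    ImpCo.nm_limit (hU i) (hcardinal i) (hmeasurable i)
  have hκpos : ∀ i, (0:Ordinal) < κ i := fun i => (hlim i).pos
  set M := 2 * n + 1 with hM
  -- separated sets
  set A' : Fin n → Set Ordinal :=
    fun i => A i ∩ (Set.Iio (κ i) ∩ ⋂ j, ImpCo.sepSet hU i j) with hA'def
  have hA'mem : ∀ i, A' i ∈ U i := fun i =>
    (hU i).inter_mem _ (hA i) _ (ImpCo.nm_inter_fin (hU i) n _ (ImpCo.sepSet_mem hU i))
  have hA'sub : ∀ i, A' i ⊆ A i := fun i => Set.inter_subset_left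
  have hA'disj : ∀ i j, U i ≠ U j → A' i ∩ A' j = ∅ := by
    intro i j hij
    rw [← Set.subset_empty_iff, ← ImpCo.sepSet_disjoint hU hij]
    rintro x ⟨hxi, hxj⟩
    have h1 := hxi.2.2; have h2 := hxj.2.2
    rw [Set.mem_iInter] at h1 h2
    exact ⟨h1 j, h2 i⟩
  have hA'avoid : ∀ i j, κ j < κ i → A' i ∩ Set.Iio (κ j) = ∅ := by
    intro i j hκij
    rw [← Set.subset_empty_iff, ← ImpCo.sepSet_avoid hU hκij]
    rintro x ⟨hxi, hxj⟩
    have h1 := hxi.2.2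
    rw [Set.mem_iInter] at h1
    exact ⟨h1 j, hxj⟩
  -- homogenize over all patterns
  obtain ⟨H1, hH1, hHom1⟩ := ImpCo.homog_listAux hU F M
    (Finset.univ.toList
      (α := (Fin n → Fin M) × (Fin n → Fin M) × (Fin M → Fin n))) A' hA'mem
  obtain ⟨H2, hH2, hunif⟩ := ImpCo.uniformize hU H1 (fun i => (hH1 i).2)
  have hH2mem : ∀ i, H2 i ∈ U i := fun i => (hH2 i).2
  have hH2A' : ∀ i, H2 i ⊆ A' i := fun i => (hH2 i).1.trans (hH1 i).1
  have hH2Iio : ∀ i, H2 i ⊆ Set.Iio (κ i) := fun i => (hU i).sets_subset _ (hH2mem i)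
  have hHom : ∀ (pat : (Fin n → Fin M) × (Fin n → Fin M) × (Fin M → Fin n)),
      ∃ bb : Bool,
      ∀ z : Fin M → Ordinal, StrictMono z → (∀ j, z j ∈ H2 (pat.2.2 j)) →
        ((F (z ∘ pat.1) = F (z ∘ pat.2.1)) ↔ bb = true) := by
    intro pat
    obtain ⟨bb, hbb⟩ := hHom1 pat (Finset.mem_toList.mpr (Finset.mem_univ pat))
    exact ⟨bb, fun z hz hzm => hbb z hz (fun j => (hH2 _).1 (hzm j))⟩
  choose e he using hHom
  -- groups
  have hgroup : ∀ i i' : Fin n, (H2 i ∩ H2 i').Nonempty → H2 i = H2 i' := by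
    intro i i' hne
    by_cases h : U i = U i'
    · exact hunif _ _ h
    · obtain ⟨x, hx, hx'⟩ := hne
      have : x ∈ A' i ∩ A' i' := ⟨hH2A' i hx, hH2A' i' hx'⟩
      rw [hA'disj i i' h] at this
      exact this.elim
  have hn1 : n - 1 < n := by omega
  set ln : Fin n := ⟨n-1, hn1⟩ with hln
  have hκtop : ∀ i : Fin n, κ i ≤ κ ln := by
    intro i
    exact hmono (by simp only [Fin.le_def, hln]; have := i.isLt; omega)
  -- canonical patterns
  set pc : Fin n → Fin n → Fin M := fun i k =>
    if (k:ℕ) ≤ (i:ℕ) then ⟨(k:ℕ), by have := k.isLt; omega⟩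
    else ⟨(k:ℕ)+1, by have := k.isLt; omega⟩ with hpc
  set qc : Fin n → Fin n → Fin M := fun i k =>
    if (k:ℕ) < (i:ℕ) then ⟨(k:ℕ), by have := k.isLt; omega⟩
    else ⟨(k:ℕ)+1, by have := k.isLt; omega⟩ with hqc
  set gc : Fin n → Fin M → Fin n := fun i j =>
    if h1 : (j:ℕ) < (i:ℕ) then ⟨(j:ℕ), by have := i.isLt; omega⟩
    else if h2 : (j:ℕ) ≤ (i:ℕ)+1 then i
    else if h3 : (j:ℕ) ≤ n then ⟨(j:ℕ)-1, by omega⟩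
    else ln with hgc
  set I : Set (Fin n) := {i | e (pc i, qc i, gc i) = false} with hI
  -- single-move lemma
  have hL1 : ∀ u v : Fin n → Ordinal, u ∈ IncProd H2 → v ∈ IncProd H2 →
      ∀ i : Fin n, (∀ j, j ≠ i → u j = v j) → u i ≠ v i →
      (F u = F v ↔ i ∉ I) := by
    have key : ∀ u v : Fin n → Ordinal, u ∈ IncProd H2 → v ∈ IncProd H2 →
        ∀ i : Fin n, (∀ j, j ≠ i → u j = v j) → u i < v i → (F u = F v ↔ i ∉ I) := by
      intro u v hu hv i hoff hlt
      have hθ : max (u ln) (v ln) < κ ln :=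
        max_lt (hH2Iio ln (hu.2 ln)) (hH2Iio ln (hv.2 ln))
      obtain ⟨tp, htp, htpH, htpθ⟩ := ImpCo.build hU hlim H2 hH2mem (M - (n+1))
        (fun _ => ln) (fun k l _ => le_rfl) (max (u ln) (v ln)) (fun k => hθ)
      have hub : ∀ a : Fin n, u a ≤ max (u ln) (v ln) := fun a =>
        le_trans (hu.1.monotone (by simp only [Fin.le_def, hln]; have := a.isLt; omega))
          (le_max_left _ _)
      have hvb : ∀ a : Fin n, v a ≤ max (u ln) (v ln) := fun a =>
        le_trans (hv.1.monotone (by simp only [Fin.le_def, hln]; have := a.isLt; omega))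
          (le_max_right _ _)
      have hvu : ∀ b : Fin n, i < b → v i < u b := by
        intro b hb
        rw [hoff b (ne_of_gt hb)]
        exact hv.1 hb
      have huv : ∀ a : Fin n, a < i → u a < v i := fun a ha => lt_trans (hu.1 ha) hlt
      set z : Fin M → Ordinal := fun j =>
        if h1 : (j:ℕ) < (i:ℕ) then u ⟨(j:ℕ), by have := i.isLt; omega⟩
        else if h2 : (j:ℕ) = (i:ℕ) then u i
        else if h3 : (j:ℕ) = (i:ℕ)+1 then v i
        else if h4 : (j:ℕ) ≤ n then u ⟨(j:ℕ)-1, by have := i.isLt; omega⟩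
        else tp ⟨(j:ℕ)-(n+1), by have := j.isLt; omega⟩ with hz
      have hzmono : StrictMono z := by
        rw [Fin.strictMono_iff_lt_succ]
        intro jj
        have hj1 : (jj.castSucc : ℕ) = (jj : ℕ) := rfl
        have hj2 : ((jj.succ : Fin (2*n+1)) : ℕ) = (jj : ℕ) + 1 := rfl
        have hjlt := jj.isLt
        simp only [hz]
        split_ifs <;>
          first
          | omega
          | exact hu.1 (by simp only [Fin.lt_def, Fin.val_mk]; omega)
          | exact hlt
          | exact huv _ (by simp only [Fin.lt_def, Fin.val_mk]; omega)
          | exact hvu _ (by simp only [Fin.lt_def, Fin.val_mk]; omega)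
          | exact lt_of_le_of_lt (hub _) (htpθ _)
          | exact lt_of_le_of_lt (hvb _) (htpθ _)
          | exact htp (by simp only [Fin.lt_def, Fin.val_mk]; omega)
      have hzg : ∀ j, z j ∈ H2 (gc i j) := by
        intro j
        simp only [hz, hgc]
        split_ifs <;>
          first
          | omega
          | exact hu.2 _
          | exact hv.2 _
          | exact htpH _
      have hzp : z ∘ pc i = u := by
        funext k
        show z (pc i k) = u k
        simp only [hpc]
        have hki := k.isLt
        split_ifs with hk
        · simp only [hz]
          split_ifs <;> first | omega | exact congrArg u (Fin.ext (by (try simp only [Fin.val_mk]); all_goals omega))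
        · simp only [hz]
          split_ifs <;> first | omega | exact congrArg u (Fin.ext (by (try simp only [Fin.val_mk]); all_goals omega))
      have hzq : z ∘ qc i = v := by
        funext k
        show z (qc i k) = v k
        simp only [hqc]
        have hki := k.isLt
        split_ifs with hk
        · simp only [hz]
          split_ifs <;>
            first
            | omega
            | exact (congrArg u (Fin.ext (by (try simp only [Fin.val_mk]); all_goals omega))).trans
                (hoff k (Fin.ne_of_val_ne (by omega)))
        · simp only [hz]
          split_ifs <;>
            first
            | omega
            | exact (congrArg u (Fin.ext (by (try simp only [Fin.val_mk]); all_goals omega))).trans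
                (hoff k (Fin.ne_of_val_ne (by omega)))
            | exact congrArg v (Fin.ext (by (try simp only [Fin.val_mk]); all_goals omega))
      have hiff := he (pc i, qc i, gc i) z hzmono hzg
      rw [show z ∘ (pc i, qc i, gc i).1 = u from hzp,
        show z ∘ (pc i, qc i, gc i).2.1 = v from hzq] at hiff
      rw [hiff]
      simp only [hI, Set.mem_setOf_eq, Bool.not_eq_false]
    intro u v hu hv i hoff hne
    rcases lt_or_gt_of_ne hne with hlt | hlt
    · exact key u v hu hv i hoff hlt
    · rw [eq_comm]
      exact key v u hv hu i (fun j hj => (hoff j hj).symm) hlt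
  -- elbow lemma
  have hL2 : ∀ x y : Fin n → Ordinal, x ∈ IncProd H2 → y ∈ IncProd H2 →
      ∀ js : Fin n, x js ≠ y js → (∀ i', js < i' → x i' = y i') → js ∈ I →
      F x ≠ F y := by
    have key2 : ∀ x y : Fin n → Ordinal, x ∈ IncProd H2 → y ∈ IncProd H2 →
        ∀ js : Fin n, x js < y js → (∀ i', js < i' → x i' = y i') → js ∈ I →
        F x ≠ F y := by
      intro x y hx hy js hlt hmax hjsI hF
      set s : Finset Ordinal :=
        Finset.image x Finset.univ ∪ Finset.image y Finset.univ with hs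
      set m₀ := s.card with hm₀def
      have hm₀ : m₀ ≤ 2*n := by
        calc m₀ ≤ (Finset.image x Finset.univ).card + (Finset.image y Finset.univ).card :=
              Finset.card_union_le _ _
          _ ≤ n + n := by
              have h1 := Finset.card_image_le (s := (Finset.univ : Finset (Fin n))) (f := x)
              have h2 := Finset.card_image_le (s := (Finset.univ : Finset (Fin n))) (f := y)
              simp only [Finset.card_univ, Fintype.card_fin] at h1 h2
              omega
          _ = 2*n := by omega
      set iso := s.orderIsoOfFin hm₀def.symm with hiso
      have hxs : ∀ i', x i' ∈ s := fun i' =>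
        Finset.mem_union_left _ (Finset.mem_image_of_mem x (Finset.mem_univ i'))
      have hys : ∀ i', y i' ∈ s := fun i' =>
        Finset.mem_union_right _ (Finset.mem_image_of_mem y (Finset.mem_univ i'))
      set P : Fin n → Fin m₀ := fun i' => iso.symm ⟨x i', hxs i'⟩ with hP
      set Q : Fin n → Fin m₀ := fun i' => iso.symm ⟨y i', hys i'⟩ with hQ
      have hPval : ∀ i', ((iso (P i') : {a // a ∈ s}) : Ordinal) = x i' := by
        intro i'; rw [hP]; simp
      have hQval : ∀ i', ((iso (Q i') : {a // a ∈ s}) : Ordinal) = y i' := by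
        intro i'; rw [hQ]; simp
      have hm₀M : m₀ < M := by omega
      set p : Fin n → Fin M := fun i' => Fin.castLE (le_of_lt hm₀M) (P i') with hp
      set q : Fin n → Fin M := fun i' => Fin.castLE (le_of_lt hm₀M) (Q i') with hq
      -- padding
      have hsupκ : s.sup id < κ ln := by
        rw [Finset.sup_lt_iff (hκpos ln)]
        intro a ha
        rcases Finset.mem_union.mp ha with h | h
        · obtain ⟨i', -, rfl⟩ := Finset.mem_image.mp h
          exact lt_of_lt_of_le (hH2Iio i' (hx.2 i')) (hκtop i')
        · obtain ⟨i', -, rfl⟩ := Finset.mem_image.mp h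
          exact lt_of_lt_of_le (hH2Iio i' (hy.2 i')) (hκtop i')
      obtain ⟨tp, htp, htpH, htpθ⟩ := ImpCo.build hU hlim H2 hH2mem (M - m₀)
        (fun _ => ln) (fun _ _ _ => le_rfl) (s.sup id) (fun _ => hsupκ)
      set z : Fin M → Ordinal := fun j =>
        if h : (j:ℕ) < m₀ then ((iso ⟨(j:ℕ), h⟩ : {a // a ∈ s}) : Ordinal)
        else tp ⟨(j:ℕ) - m₀, by have := j.isLt; omega⟩ with hzdef
      have hzpval : ∀ i', z (p i') = x i' := by
        intro i'
        have hlt' : ((p i' : Fin M) : ℕ) < m₀ := (P i').isLt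
        simp only [hzdef]
        rw [dif_pos hlt']
        have h5 : (⟨((p i' : Fin M):ℕ), hlt'⟩ : Fin m₀) = P i' := Fin.ext rfl
        rw [h5]
        exact hPval i'
      have hzqval : ∀ i', z (q i') = y i' := by
        intro i'
        have hlt' : ((q i' : Fin M) : ℕ) < m₀ := (Q i').isLt
        simp only [hzdef]
        rw [dif_pos hlt']
        have h5 : (⟨((q i' : Fin M):ℕ), hlt'⟩ : Fin m₀) = Q i' := Fin.ext rfl
        rw [h5]
        exact hQval i'
      have hzmono : StrictMono z := by
        intro c d hcd
        have hcd' : (c:ℕ) < (d:ℕ) := hcd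
        simp only [hzdef]
        split_ifs with h1 h2 h2
        · exact Subtype.coe_lt_coe.mpr (iso.strictMono (Fin.mk_lt_mk.mpr hcd'))
        · exact lt_of_le_of_lt (Finset.le_sup (f := id) (iso ⟨(c:ℕ), h1⟩).2) (htpθ _)
        · omega
        · exact htp (Fin.mk_lt_mk.mpr (by omega))
      have hg₀ex : ∀ (j : Fin M), (j:ℕ) < m₀ → ∃ i', z j ∈ H2 i' := by
        intro j hj
        have hmem : ((iso ⟨(j:ℕ), hj⟩ : {a // a ∈ s}) : Ordinal) ∈ s := (iso _).2
        have hzj : z j = ((iso ⟨(j:ℕ), hj⟩ : {a // a ∈ s}) : Ordinal) := by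
          simp only [hzdef]; rw [dif_pos hj]
        rcases Finset.mem_union.mp hmem with h | h
        · obtain ⟨i', -, heq⟩ := Finset.mem_image.mp h
          exact ⟨i', by rw [hzj, ← heq]; exact hx.2 i'⟩
        · obtain ⟨i', -, heq⟩ := Finset.mem_image.mp h
          exact ⟨i', by rw [hzj, ← heq]; exact hy.2 i'⟩
      set g₀ : Fin M → Fin n := fun j =>
        if h : (j:ℕ) < m₀ then Classical.choose (hg₀ex j h) else ln with hg₀
      have hzg : ∀ j, z j ∈ H2 (g₀ j) := by
        intro j
        simp only [hg₀]
        split_ifs with h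
        · exact Classical.choose_spec (hg₀ex j h)
        · simp only [hzdef]
          rw [dif_neg h]
          exact htpH _
      -- pattern relations
      have hPQiff : ∀ i', (p i' = q i' ↔ x i' = y i') := by
        intro i'
        constructor
        · intro h
          have h1 : P i' = Q i' := Fin.castLE_injective _ h
          have h2 := congrArg iso h1
          rw [hP, hQ] at h2
          simp only [OrderIso.apply_symm_apply] at h2
          exact Subtype.ext_iff.mp h2
        · intro h
          simp only [hp, hq, hP, hQ]
          congr 1
          exact congrArg iso.symm (Subtype.ext h)
      have hpmono : StrictMono p := by
        intro c d hcd
        exact (OrderIso.symm iso).strictMono (Subtype.mk_lt_mk.mpr (hx.1 hcd))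
      have hqmono : StrictMono q := by
        intro c d hcd
        exact (OrderIso.symm iso).strictMono (Subtype.mk_lt_mk.mpr (hy.1 hcd))
      have hplt : p js < q js := by
        exact (OrderIso.symm iso).strictMono (Subtype.mk_lt_mk.mpr hlt)
      have hqnotp : ∀ i', p i' ≠ q js := by
        intro i' hcon
        rcases lt_trichotomy i' js with h | h | h
        · have h1 := hpmono h
          rw [hcon] at h1
          exact absurd hplt (not_lt.mpr h1.le)
        · subst h
          exact hplt.ne hcon
        · have h1 : p i' = q i' := (hPQiff i').2 (hmax i' h)
          rw [h1] at hcon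
          exact absurd (hqmono.injective hcon) (ne_of_gt h)
      -- the homogeneous value is `true`
      have hbb := he (p, q, g₀) z hzmono hzg
      rw [show z ∘ (p, q, g₀).1 = x from funext hzpval,
        show z ∘ (p, q, g₀).2.1 = y from funext hzqval] at hbb
      have hbtrue : e (p, q, g₀) = true := hbb.mp hF
      -- κ ∘ g₀ is monotone
      have hgm : ∀ (c d : Fin M), c ≤ d → κ (g₀ c) ≤ κ (g₀ d) := by
        intro c d hcd
        by_contra hcon
        push_neg at hcon
        have h1 : z c ∈ A' (g₀ c) := hH2A' _ (hzg c)
        have h3 : z c < κ (g₀ d) :=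
          lt_of_le_of_lt (hzmono.monotone hcd) (hH2Iio _ (hzg d))
        have h4 := hA'avoid (g₀ c) (g₀ d) hcon
        have h5 : z c ∈ A' (g₀ c) ∩ Set.Iio (κ (g₀ d)) := ⟨h1, h3⟩
        rw [h4] at h5
        exact h5
      -- elbow construction
      set a0 : ℕ := ((q js : Fin M) : ℕ) with ha0
      have ha0m : a0 < m₀ := (Q js).isLt
      set G : Fin (M+1) → Fin n := fun k =>
        if h : (k:ℕ) ≤ a0 then g₀ ⟨(k:ℕ), by omega⟩
        else g₀ ⟨(k:ℕ)-1, by have := k.isLt; omega⟩ with hG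
      have hGm : ∀ (c d : Fin (M+1)), c ≤ d → κ (G c) ≤ κ (G d) := by
        intro c d hcd
        have hcd' : (c:ℕ) ≤ (d:ℕ) := hcd
        simp only [hG]
        split_ifs with h1 h2 h2
        · exact hgm _ _ (by simp only [Fin.mk_le_mk]; omega)
        · exact hgm _ _ (by simp only [Fin.mk_le_mk]; omega)
        · omega
        · exact hgm _ _ (by simp only [Fin.mk_le_mk]; omega)
      obtain ⟨t, ht, htH, -⟩ := ImpCo.build hU hlim H2 hH2mem (M+1) G hGm 0
        (fun k => hκpos _)
      set z1 : Fin M → Ordinal := fun j =>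
        t ⟨if (j:ℕ) ≤ a0 then (j:ℕ) else (j:ℕ)+1, by
          have := j.isLt; split_ifs <;> omega⟩ with hz1
      set z2 : Fin M → Ordinal := fun j =>
        t ⟨if (j:ℕ) < a0 then (j:ℕ) else (j:ℕ)+1, by
          have := j.isLt; split_ifs <;> omega⟩ with hz2
      have hz1m : StrictMono z1 := by
        intro c d hcd
        have hcd' : (c:ℕ) < (d:ℕ) := hcd
        simp only [hz1]
        exact ht (Fin.mk_lt_mk.mpr (by split_ifs <;> omega))
      have hz2m : StrictMono z2 := by
        intro c d hcd
        have hcd' : (c:ℕ) < (d:ℕ) := hcd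
        simp only [hz2]
        exact ht (Fin.mk_lt_mk.mpr (by split_ifs <;> omega))
      have hGval1 : ∀ (j : Fin M) (h : (j:ℕ) ≤ a0), G ⟨(j:ℕ), by have := j.isLt; omega⟩ = g₀ j := by
        intro j h
        simp only [hG]
        rw [dif_pos h]
      have hGval2 : ∀ (j : Fin M) (h : ¬ (j:ℕ) < a0), G ⟨(j:ℕ)+1, by have := j.isLt; omega⟩ = g₀ j := by
        intro j h
        simp only [hG]
        rw [dif_neg (by omega)]
        exact congrArg g₀ (Fin.ext (by simp only [Fin.val_mk]; omega))
      have hz1g : ∀ j, z1 j ∈ H2 (g₀ j) := by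
        intro j
        simp only [hz1]
        split_ifs with h
        · have h1 := htH ⟨(j:ℕ), by have := j.isLt; omega⟩
          rwa [hGval1 j h] at h1
        · have h1 := htH ⟨(j:ℕ)+1, by have := j.isLt; omega⟩
          rwa [hGval2 j (by omega)] at h1
      have hz2g : ∀ j, z2 j ∈ H2 (g₀ j) := by
        intro j
        simp only [hz2]
        split_ifs with h
        · have h1 := htH ⟨(j:ℕ), by have := j.isLt; omega⟩
          rwa [hGval1 j (le_of_lt h)] at h1
        · have h1 := htH ⟨(j:ℕ)+1, by have := j.isLt; omega⟩
          rwa [hGval2 j h] at h1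
      -- z1 and z2 agree on `p`
      have hppeq : z1 ∘ p = z2 ∘ p := by
        funext i'
        have hne := hqnotp i'
        have hnev : ((p i' : Fin M):ℕ) ≠ a0 := by
          intro hc
          exact hne (Fin.ext hc)
        show z1 (p i') = z2 (p i')
        simp only [hz1, hz2]
        exact congrArg t (Fin.ext (by simp only [Fin.val_mk]; split_ifs <;> omega))
      -- conclude equality of F on the two q-tuples
      have e1 := (he (p, q, g₀) z1 hz1m hz1g).mpr hbtrue
      have e2 := (he (p, q, g₀) z2 hz2m hz2g).mpr hbtrue
      have hq12 : F (z1 ∘ q) = F (z2 ∘ q) := by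
        calc F (z1 ∘ q) = F (z1 ∘ p) := e1.symm
          _ = F (z2 ∘ p) := by rw [hppeq]
          _ = F (z2 ∘ q) := e2
      -- the two q-tuples are in the increasing product and differ exactly at js
      have hgrp : ∀ i', H2 (g₀ (q i')) = H2 i' := by
        intro i'
        apply hgroup
        exact ⟨z (q i'), hzg (q i'), by rw [hzqval i']; exact hy.2 i'⟩
      have hu1 : z1 ∘ q ∈ IncProd H2 := by
        refine ⟨hz1m.comp hqmono, fun i' => ?_⟩
        have h1 := hz1g (q i')
        rwa [hgrp i'] at h1
      have hu2 : z2 ∘ q ∈ IncProd H2 := by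
        refine ⟨hz2m.comp hqmono, fun i' => ?_⟩
        have h1 := hz2g (q i')
        rwa [hgrp i'] at h1
      have hdiff : ∀ i'', i'' ≠ js → (z1 ∘ q) i'' = (z2 ∘ q) i'' := by
        intro i'' hne
        have hnev : ((q i'' : Fin M):ℕ) ≠ a0 := by
          intro hc
          exact hne (hqmono.injective (Fin.ext hc))
        show z1 (q i'') = z2 (q i'')
        simp only [hz1, hz2]
        exact congrArg t (Fin.ext (by simp only [Fin.val_mk]; split_ifs <;> omega))
      have hne12 : (z1 ∘ q) js ≠ (z2 ∘ q) js := by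
        show z1 (q js) ≠ z2 (q js)
        simp only [hz1, hz2]
        apply ne_of_lt
        exact ht (Fin.mk_lt_mk.mpr (by split_ifs <;> omega))
      have hnotI := (hL1 (z1 ∘ q) (z2 ∘ q) hu1 hu2 js hdiff hne12).mp hq12
      exact hnotI hjsI
    intro x y hx hy js hne hmax hjsI
    rcases lt_or_gt_of_ne hne with hlt | hlt
    · exact key2 x y hx hy js hlt hmax hjsI
    · intro hF
      exact key2 y x hy hx js hlt (fun i' h => (hmax i' h).symm) hjsI hF.symm
  -- main claim by induction on number of differences
  have hmain : ∀ (k : ℕ) (x y : Fin n → Ordinal), x ∈ IncProd H2 → y ∈ IncProd H2 →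
      (Finset.univ.filter fun i => x i ≠ y i).card = k →
      (F x = F y ↔ ∀ i ∈ I, x i = y i) := by
    intro k
    induction k using Nat.strong_induction_on with
    | _ k ih =>
    intro x y hx hy hcard
    by_cases h0 : k = 0
    · subst h0
      have hxy : x = y := by
        funext i
        by_contra hne
        have : i ∈ Finset.univ.filter fun i => x i ≠ y i :=
          Finset.mem_filter.mpr ⟨Finset.mem_univ i, hne⟩
        rw [Finset.card_eq_zero.mp hcard] at this
        exact absurd this (Finset.notMem_empty i)
      subst hxy
      simp
    · have hdne : (Finset.univ.filter fun i => x i ≠ y i).Nonempty :=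
        Finset.card_pos.mp (by omega)
      set d := Finset.univ.filter fun i => x i ≠ y i with hd
      set js := d.max' hdne with hjsdef
      have hjs : x js ≠ y js := (Finset.mem_filter.mp (d.max'_mem hdne)).2
      have hmax : ∀ i', js < i' → x i' = y i' := by
        intro i' hi'
        by_contra hne
        have h1 : i' ∈ d := Finset.mem_filter.mpr ⟨Finset.mem_univ i', hne⟩
        exact absurd (d.le_max' i' h1) (not_le.mpr hi')
      by_cases hjsI : js ∈ I
      · constructor
        · intro hF; exact absurd hF (hL2 x y hx hy js hjs hmax hjsI)
        · intro hiff; exact absurd (hiff js hjsI) hjs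
      · rcases lt_or_gt_of_ne hjs with hlt | hlt
        · set w := Function.update x js (y js) with hwdef
          have hwv : ∀ i, i ≠ js → w i = x i := fun i hi => Function.update_of_ne hi _ _
          have hwjs : w js = y js := Function.update_self _ _ _
          have hw : w ∈ IncProd H2 := by
            constructor
            · intro a b hab
              rcases eq_or_ne a js with rfl | ha
              · rw [hwjs, hwv b (ne_of_gt hab), hmax b hab]
                exact hy.1 hab
              · rcases eq_or_ne b js with rfl | hb
                · rw [hwjs, hwv a ha]
                  exact lt_trans (hx.1 hab) hlt
                · rw [hwv a ha, hwv b hb]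
                  exact hx.1 hab
            · intro i
              rcases eq_or_ne i js with rfl | hi
              · rw [hwjs]; exact hy.2 js
              · rw [hwv i hi]; exact hx.2 i
          have hFxw : F x = F w :=
            (hL1 x w hx hw js (fun j hj => (hwv j hj).symm)
              (by rw [hwjs]; exact hjs)).mpr hjsI
          have hdw : (Finset.univ.filter fun i => w i ≠ y i) = d.erase js := by
            ext i
            simp only [Finset.mem_filter, Finset.mem_univ, true_and, Finset.mem_erase, hd]
            constructor
            · intro hne
              have hi : i ≠ js := by
                rintro rfl; rw [hwjs] at hne; exact hne rfl
              exact ⟨hi, by rwa [hwv i hi] at hne⟩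
            · rintro ⟨hi, hne⟩
              rwa [hwv i hi]
          have hcard' : (Finset.univ.filter fun i => w i ≠ y i).card = k - 1 := by
            rw [hdw, Finset.card_erase_of_mem (d.max'_mem hdne), hcard]
          have ih' := ih (k-1) (by omega) w y hw hy hcard'
          rw [hFxw, ih']
          constructor
          · intro h i hiI
            have hi : i ≠ js := by rintro rfl; exact hjsI hiI
            rw [← hwv i hi]; exact h i hiI
          · intro h i hiI
            have hi : i ≠ js := by rintro rfl; exact hjsI hiI
            rw [hwv i hi]; exact h i hiI
        · set w := Function.update y js (x js) with hwdef
          have hwv : ∀ i, i ≠ js → w i = y i := fun i hi => Function.update_of_ne hi _ _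
          have hwjs : w js = x js := Function.update_self _ _ _
          have hw : w ∈ IncProd H2 := by
            constructor
            · intro a b hab
              rcases eq_or_ne a js with rfl | ha
              · rw [hwjs, hwv b (ne_of_gt hab), ← hmax b hab]
                exact hx.1 hab

              · rcases eq_or_ne b js with rfl | hb
                · rw [hwjs, hwv a ha]
                  exact lt_trans (hy.1 hab) hlt
                · rw [hwv a ha, hwv b hb]
                  exact hy.1 hab
            · intro i
              rcases eq_or_ne i js with rfl | hi
              · rw [hwjs]; exact hx.2 js
              · rw [hwv i hi]; exact hy.2 i
          have hFyw : F y = F w :=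
            (hL1 y w hy hw js (fun j hj => (hwv j hj).symm)
              (by rw [hwjs]; exact fun hc => hjs hc.symm)).mpr hjsI
          have hdw : (Finset.univ.filter fun i => x i ≠ w i) = d.erase js := by
            ext i
            simp only [Finset.mem_filter, Finset.mem_univ, true_and, Finset.mem_erase, hd]
            constructor
            · intro hne
              have hi : i ≠ js := by
                rintro rfl; rw [hwjs] at hne; exact hne rfl
              exact ⟨hi, by rwa [hwv i hi] at hne⟩
            · rintro ⟨hi, hne⟩
              rwa [hwv i hi]
          have hcard' : (Finset.univ.filter fun i => x i ≠ w i).card = k - 1 := by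
            rw [hdw, Finset.card_erase_of_mem (d.max'_mem hdne), hcard]
          have ih' := ih (k-1) (by omega) x w hx hw hcard'
          rw [hFyw, ih']
          constructor
          · intro h i hiI
            have hi : i ≠ js := by rintro rfl; exact hjsI hiI
            rw [← hwv i hi]; exact h i hiI
          · intro h i hiI
            have hi : i ≠ js := by rintro rfl; exact hjsI hiI
            rw [hwv i hi]; exact h i hiI
  refine ⟨H2, I, fun i => ⟨(hH2A' i).trans (hA'sub i), hH2mem i⟩, ?_⟩
  intro x hx y hy
  exact hmain _ x y hx hy rfl
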